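/- Let p ≡ 5 (mod 8) be a prime, let g be a primitive element of F_p, let C_0^(4) be the subgroup of F_p^* of index 4, and let CT_p be the cyclotomic tournament with vertex set F_p and an arc from x to y if and only if x - y ∈ C_0^(4) ∪ gC_0^(4). Then the automorphism group of CT_p acting on the set of arcs of CT_p has exactly two orbits, namely {(x, y) : x - y ∈ C_0^(4)} and {(x, y) : x - y ∈ gC_0^(4)}. -/

import Mathlib

/-- `cycC4 g i` is the coset `g^i C_0^{(4)}` of the index-4 subgroup `C_0^{(4)}`
of the cyclic group generated by the primitive element `g`. -/
def cycC4 {F : Type*} [Monoid F] (g : F) (i : ℕ) : Set F :=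
  {x | ∃ k : ℕ, x = g ^ (4 * k + i)}

section Aux
variable {F : Type*} [Field F] [Fintype F]

lemma aux_pow_eq_pow {g : F} (hg0 : g ≠ 0) (m n : ℕ) :
    g ^ m = g ^ n ↔ m ≡ n [MOD orderOf g] := by
  set u : Fˣ := Units.mk0 g hg0 with hu
  have hval : (u : F) = g := rfl
  have hord : orderOf g = orderOf u := by rw [← hval, orderOf_units]
  rw [hord, ← pow_eq_pow_iff_modEq (x := u)]
  constructor
  · intro h; ext; push_cast; simpa [hval] using h
  · intro h; have := congrArg (Units.val) h; simpa [hval] using this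

lemma mem_cycC4_iff {g : F} (hg0 : g ≠ 0) {n : ℕ}
    (hg : orderOf g = n) (h4 : 4 ∣ n) (hn : 0 < n) {i j : ℕ} (hi : i < 4) :
    g ^ j ∈ cycC4 g i ↔ j % 4 = i := by
  obtain ⟨m, hm⟩ := h4
  constructor
  · rintro ⟨k, hk⟩
    rw [aux_pow_eq_pow hg0, hg] at hk
    have := Nat.ModEq.of_dvd ⟨m, hm⟩ hk
    unfold Nat.ModEq at this
    omega
  · intro hj
    refine ⟨(j + n - i) / 4, ?_⟩
    have h1 : 4 * ((j + n - i) / 4) + i = j + n := by omega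
    rw [h1, pow_add, ← hg, pow_orderOf_eq_one, mul_one]

variable {p s : ℕ} {g : F}

lemma hg_ne_zero (hs : p = 8 * s + 5) (hg : orderOf g = p - 1) : g ≠ 0 := by
  intro h
  have h1 : g ^ (p - 1) = 1 := hg ▸ pow_orderOf_eq_one g
  rw [h, zero_pow (by omega)] at h1
  exact zero_ne_one h1

lemma gen_of_ne_zero (hs : p = 8 * s + 5) (hF : Fintype.card F = p)
    (hg : orderOf g = p - 1) : ∀ x : F, x ≠ 0 → ∃ j, j < p - 1 ∧ g ^ j = x := by
  have hg0 : g ≠ 0 := hg_ne_zero hs hg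
  classical
  set S : Finset F := (Finset.range (p - 1)).image (g ^ ·) with hS
  have hinj : Set.InjOn (g ^ ·) (Finset.range (p - 1)) := by
    intro a ha b hb hab
    simp only [Finset.coe_range, Set.mem_Iio] at ha hb
    rw [aux_pow_eq_pow hg0, hg] at hab
    exact hab.eq_of_lt_of_lt ha hb
  have hcardS : S.card = p - 1 := by
    rw [hS, Finset.card_image_of_injOn hinj, Finset.card_range]
  have hsub : S ⊆ Finset.univ.erase 0 := by
    intro x hx
    simp only [hS, Finset.mem_image] at hx
    obtain ⟨j, _, rfl⟩ := hx
    exact Finset.mem_erase.2 ⟨pow_ne_zero _ hg0, Finset.mem_univ _⟩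
  have hcardT : (Finset.univ.erase (0 : F)).card = p - 1 := by
    rw [Finset.card_erase_of_mem (Finset.mem_univ _), Finset.card_univ, hF]
  have hEq : S = Finset.univ.erase 0 :=
    Finset.eq_of_subset_of_card_le hsub (by omega)
  intro x hx
  have : x ∈ S := hEq ▸ Finset.mem_erase.2 ⟨hx, Finset.mem_univ _⟩
  simp only [hS, Finset.mem_image, Finset.mem_range] at this
  obtain ⟨j, hj, hjx⟩ := this
  exact ⟨j, hj, hjx⟩

def Dset {F : Type*} [Monoid F] (g : F) : Set F := cycC4 g 0 ∪ cycC4 g 1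

open Classical in
noncomputable def Cfin (g : F) (i : ℕ) : Finset F := Finset.univ.filter (· ∈ cycC4 g i)

open Classical in
noncomputable def Dfin (g : F) : Finset F := Finset.univ.filter (· ∈ Dset g)

open Classical in
noncomputable def nnc (g : F) (c : F) : ℕ :=
  (Finset.univ.filter (fun u => u ∈ Dset g ∧ u - c ∈ Dset g)).card


variable (hs : p = 8 * s + 5) (hF : Fintype.card F = p) (hg : orderOf g = p - 1)
include hs hg hF

lemma cyc_disj {i j : ℕ} (hi : i < 4) (hj : j < 4) (hij : i ≠ j) {x : F}
    (h1 : x ∈ cycC4 g i) (h2 : x ∈ cycC4 g j) : False := by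
  have hg0 : g ≠ 0 := hg_ne_zero hs hg
  obtain ⟨k, rfl⟩ := h1
  rw [mem_cycC4_iff hg0 hg ⟨2 * s + 1, by omega⟩ (by omega) hj] at h2
  omega

lemma mem_Dset_iff (j : ℕ) : g ^ j ∈ Dset g ↔ j % 4 = 0 ∨ j % 4 = 1 := by
  have hg0 : g ≠ 0 := hg_ne_zero hs hg
  unfold Dset
  rw [Set.mem_union, mem_cycC4_iff hg0 hg ⟨2 * s + 1, by omega⟩ (by omega) (by omega),
    mem_cycC4_iff hg0 hg ⟨2 * s + 1, by omega⟩ (by omega) (by omega)]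

lemma cyc_trans {i : ℕ} {c d : F} (hc : c ∈ cycC4 g i) (hd : d ∈ cycC4 g i) :
    ∃ a ∈ cycC4 g 0, a * c = d := by
  obtain ⟨k, rfl⟩ := hc
  obtain ⟨l, rfl⟩ := hd
  have hgn : g ^ (8 * s + 4) = 1 := by
    have := pow_orderOf_eq_one g; rw [hg] at this
    have h8 : p - 1 = 8 * s + 4 := by omega
    rwa [h8] at this
  refine ⟨g ^ (4 * (l + 8 * k * s + 3 * k + 2 * s * i + i) + 0), ⟨_, rfl⟩, ?_⟩
  rw [← pow_add]
  have hexp : 4 * (l + 8 * k * s + 3 * k + 2 * s * i + i) + 0 + (4 * k + i)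
      = (4 * l + i) + (8 * s + 4) * (4 * k + i) := by ring
  rw [hexp, pow_add, pow_mul, hgn, one_pow, mul_one]

lemma scale_Dset {a : F} (ha : a ∈ cycC4 g 0) (x : F) : x ∈ Dset g ↔ a * x ∈ Dset g := by
  have hg0 : g ≠ 0 := hg_ne_zero hs hg
  obtain ⟨k, rfl⟩ := ha
  by_cases hx : x = 0
  · subst hx; rw [mul_zero]
  · obtain ⟨j, _, rfl⟩ := gen_of_ne_zero hs hF hg x hx
    rw [← pow_add, mem_Dset_iff hs hF hg, mem_Dset_iff hs hF hg]
    omega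

lemma neg_one_mem : (-1 : F) ∈ cycC4 g 2 := by
  have hg0 : g ≠ 0 := hg_ne_zero hs hg
  have h2 : (g ^ ((p - 1) / 2)) * (g ^ ((p - 1) / 2)) = 1 := by
    rw [← pow_add]
    have : (p - 1) / 2 + (p - 1) / 2 = p - 1 := by omega
    rw [this, ← hg, pow_orderOf_eq_one]
  rcases mul_self_eq_one_iff.1 h2 with h | h
  · exfalso
    rw [show (1 : F) = g ^ 0 by rw [pow_zero], aux_pow_eq_pow hg0, hg] at h
    have := h.eq_of_lt_of_lt (by omega) (by omega)
    omega
  · rw [← h]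
    exact ⟨s, by congr 1; omega⟩

omit hs hF hg in
lemma nnc_neg (c : F) : nnc g (-c) = nnc g c := by
  classical
  unfold nnc
  apply Finset.card_bij (fun u _ => u + c)
  · intro u hu
    simp only [Finset.mem_filter, Finset.mem_univ, true_and] at hu ⊢
    constructor
    · have := hu.2; rwa [sub_neg_eq_add] at this
    · simpa using hu.1
  · intro u1 h1 u2 h2 h; exact add_right_cancel h
  · intro v hv
    simp only [Finset.mem_filter, Finset.mem_univ, true_and] at hv
    exact ⟨v - c, by simp only [Finset.mem_filter, Finset.mem_univ, true_and,
      sub_neg_eq_add, sub_add_cancel]; exact ⟨hv.2, hv.1⟩, by ring⟩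

lemma nnc_scale {a : F} (ha : a ∈ cycC4 g 0) (c : F) : nnc g (a * c) = nnc g c := by
  classical
  have ha0 : a ≠ 0 := by obtain ⟨k, rfl⟩ := ha; exact pow_ne_zero _ (hg_ne_zero hs hg)
  unfold nnc
  symm
  apply Finset.card_bij (fun u _ => a * u)
  · intro u hu
    simp only [Finset.mem_filter, Finset.mem_univ, true_and] at hu ⊢
    refine ⟨(scale_Dset hs hF hg ha u).1 hu.1, ?_⟩
    rw [← mul_sub]
    exact (scale_Dset hs hF hg ha (u - c)).1 hu.2
  · intro u1 h1 u2 h2 h; exact mul_left_cancel₀ ha0 h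
  · intro v hv
    simp only [Finset.mem_filter, Finset.mem_univ, true_and] at hv
    refine ⟨a⁻¹ * v, ?_, by field_simp⟩
    simp only [Finset.mem_filter, Finset.mem_univ, true_and]
    constructor
    · rw [scale_Dset hs hF hg ha (a⁻¹ * v), mul_inv_cancel_left₀ ha0]; exact hv.1
    · rw [scale_Dset hs hF hg ha (a⁻¹ * v - c), mul_sub, mul_inv_cancel_left₀ ha0]
      exact hv.2

lemma nnc_class {i : ℕ} {c : F} (hc : c ∈ cycC4 g i) : nnc g c = nnc g (g ^ i) := by
  obtain ⟨a, ha, hac⟩ := cyc_trans hs hF hg (d := g ^ i) hc ⟨0, by norm_num⟩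
  rw [← hac, nnc_scale hs hF hg ha]

lemma nnc_two (i : ℕ) : nnc g (g ^ (i + 2)) = nnc g (g ^ i) := by
  have hb : (-(g ^ 2) : F) ∈ cycC4 g 0 := by
    obtain ⟨k, hk⟩ := neg_one_mem hs hF hg
    refine ⟨k + 1, ?_⟩
    have : (-(g ^ 2) : F) = (-1) * g ^ 2 := by ring
    rw [this, hk, ← pow_add]
    congr 1
  have h1 : (g ^ (i + 2) : F) = -((-(g ^ 2)) * g ^ i) := by ring
  rw [h1, nnc_neg, nnc_scale hs hF hg hb]

lemma card_Cfin {i : ℕ} (hi : i < 4) : (Cfin g i).card = 2 * s + 1 := by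
  classical
  have hg0 : g ≠ 0 := hg_ne_zero hs hg
  have hn : p - 1 = 8 * s + 4 := by omega
  have himg : Cfin g i = (Finset.range (2 * s + 1)).image (fun k => g ^ (4 * k + i)) := by
    ext x
    simp only [Cfin, Finset.mem_filter, Finset.mem_univ, true_and, Finset.mem_image,
      Finset.mem_range]
    constructor
    · rintro ⟨k, rfl⟩
      set e := (4 * k + i) % (p - 1) with he
      have hee : g ^ e = g ^ (4 * k + i) := by rw [he, ← hg]; exact pow_mod_orderOf g _
      have helt : e < p - 1 := Nat.mod_lt _ (by omega)
      have hmod : e % 4 = i := by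
        have h1 : e ≡ 4 * k + i [MOD 4] :=
          Nat.ModEq.of_dvd ⟨2 * s + 1, by omega⟩ (Nat.mod_modEq _ _)
        unfold Nat.ModEq at h1
        omega
      refine ⟨e / 4, by omega, ?_⟩
      rw [show 4 * (e / 4) + i = e by omega, hee]
    · rintro ⟨k, hk, rfl⟩
      exact ⟨k, rfl⟩
  rw [himg, Finset.card_image_of_injOn, Finset.card_range]
  intro a ha b hb hab
  simp only [Finset.coe_range, Set.mem_Iio] at ha hb
  rw [aux_pow_eq_pow hg0, hg] at hab
  have := hab.eq_of_lt_of_lt (by omega) (by omega)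
  omega

omit hs hF hg in
open Classical in
lemma Dfin_eq : Dfin g = Cfin g 0 ∪ Cfin g 1 := by
  classical
  ext x
  simp [Dfin, Cfin, Dset, Set.mem_union]

lemma card_Dfin : (Dfin g).card = 4 * s + 2 := by
  classical
  have hdisj : Disjoint (Cfin g 0) (Cfin g 1) := by
    rw [Finset.disjoint_left]
    intro x hx hx'
    simp only [Cfin, Finset.mem_filter, Finset.mem_univ, true_and] at hx hx'
    exact cyc_disj hs hF hg (i := 0) (j := 1) (by omega) (by omega) (by omega) hx hx'
  rw [Dfin_eq, Finset.card_union_of_disjoint hdisj,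
    card_Cfin hs hF hg (i := 0) (by omega), card_Cfin hs hF hg (i := 1) (by omega)]
  omega

omit hs hF hg in
lemma nnc_zero : nnc g 0 = (Dfin g).card := by
  classical
  unfold nnc Dfin
  apply congrArg Finset.card
  ext u
  simp [sub_zero]

omit hs hF hg in
lemma sum_nnc : ∑ c : F, nnc g c = (Dfin g).card * (Dfin g).card := by
  classical
  have h1 : ∑ c : F, nnc g c
      = ∑ c : F, ∑ u : F, (if u ∈ Dset g ∧ u - c ∈ Dset g then 1 else 0) := by
    refine Finset.sum_congr rfl fun c _ => ?_
    unfold nnc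
    rw [Finset.card_filter]
  rw [h1, Finset.sum_comm]
  have h2 : ∀ u : F, (∑ c : F, if u ∈ Dset g ∧ u - c ∈ Dset g then 1 else 0)
      = (if u ∈ Dset g then (Dfin g).card else 0) := by
    intro u
    by_cases hu : u ∈ Dset g
    · simp only [hu, true_and, if_true]
      have h3 : (∑ c : F, if u - c ∈ Dset g then (1:ℕ) else 0)
          = ∑ c : F, if c ∈ Dset g then (1:ℕ) else 0 :=
        Fintype.sum_equiv (Equiv.subLeft u) _ _ (fun c => by simp [Equiv.subLeft]; congr)
      rw [h3, ← Finset.card_filter]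
      rfl
    · simp [hu]
  rw [Finset.sum_congr rfl (fun u _ => h2 u), ← Finset.sum_filter]
  rw [Finset.sum_const]
  have : (Finset.univ.filter (· ∈ Dset g)) = Dfin g := rfl
  rw [this, smul_eq_mul]

open Classical in
lemma univ_partition :
    (Finset.univ : Finset F) = insert 0 ((Cfin g 0 ∪ Cfin g 1) ∪ (Cfin g 2 ∪ Cfin g 3)) := by
  classical
  ext x
  simp only [Finset.mem_univ, true_iff, Finset.mem_insert, Finset.mem_union, Cfin,
    Finset.mem_filter, Finset.mem_univ, true_and]
  by_cases hx : x = 0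
  · exact Or.inl hx
  · right
    obtain ⟨j, hj, rfl⟩ := gen_of_ne_zero hs hF hg x hx
    have hmemi : g ^ j ∈ cycC4 g (j % 4) := ⟨j / 4, by congr 1; omega⟩
    rcases (show j % 4 = 0 ∨ j % 4 = 1 ∨ j % 4 = 2 ∨ j % 4 = 3 by omega) with h|h|h|h <;>
      rw [h] at hmemi <;> tauto

lemma cfin_disj {i j : ℕ} (hi : i < 4) (hj : j < 4) (hij : i ≠ j) :
    Disjoint (Cfin g i) (Cfin g j) := by
  classical
  rw [Finset.disjoint_left]
  intro x hx hx'
  simp only [Cfin, Finset.mem_filter, Finset.mem_univ, true_and] at hx hx'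
  exact cyc_disj hs hF hg hi hj hij hx hx'

lemma sum_class {i : ℕ} (hi : i < 4) :
    ∑ c ∈ Cfin g i, nnc g c = (2 * s + 1) * nnc g (g ^ i) := by
  classical
  rw [Finset.sum_congr rfl (fun c hc => nnc_class hs hF hg (i := i) (by
    simpa [Cfin] using hc)), Finset.sum_const, card_Cfin hs hF hg hi, smul_eq_mul]

lemma nnc_ne : nnc g 1 ≠ nnc g g := by
  classical
  have hg0 : g ≠ 0 := hg_ne_zero hs hg
  have h0nc : ∀ i : ℕ, (0 : F) ∉ cycC4 g i := by
    rintro i ⟨k, hk⟩; exact pow_ne_zero _ hg0 hk.symm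
  have h0 : (0 : F) ∉ (Cfin g 0 ∪ Cfin g 1) ∪ (Cfin g 2 ∪ Cfin g 3) := by
    simp only [Finset.mem_union, Cfin, Finset.mem_filter, Finset.mem_univ, true_and]
    rintro ((h | h) | (h | h)) <;> exact h0nc _ h
  have hsum := sum_nnc (g := g)
  rw [univ_partition hs hF hg, Finset.sum_insert h0,
    Finset.sum_union (by
      refine Finset.disjoint_union_left.2 ⟨?_, ?_⟩ <;>
        refine Finset.disjoint_union_right.2 ⟨?_, ?_⟩ <;>
        exact cfin_disj hs hF hg (by omega) (by omega) (by omega)),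
    Finset.sum_union (cfin_disj hs hF hg (by omega) (by omega) (by omega)),
    Finset.sum_union (cfin_disj hs hF hg (by omega) (by omega) (by omega)),
    sum_class hs hF hg (i := 0) (by omega), sum_class hs hF hg (i := 1) (by omega),
    sum_class hs hF hg (i := 2) (by omega), sum_class hs hF hg (i := 3) (by omega),
    nnc_zero, card_Dfin hs hF hg] at hsum
  have h2 : nnc g (g ^ 2) = nnc g (g ^ 0) := by
    have := nnc_two hs hF hg 0; norm_num at this ⊢; exact this
  have h3 : nnc g (g ^ 3) = nnc g (g ^ 1) := by
    have := nnc_two hs hF hg 1; norm_num at this ⊢; exact this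
  rw [h2, h3, pow_zero, pow_one] at hsum
  set N0 := nnc g 1 with hN0
  set N1 := nnc g g with hN1
  have key : 2 + 2 * N0 + 2 * N1 = 8 * s + 4 := by
    have hpos : 0 < 2 * s + 1 := by omega
    apply Nat.eq_of_mul_eq_mul_left hpos
    nlinarith [hsum]
  intro h
  omega

omit hs hF hg in
lemma nnc_invariant (σ : Equiv.Perm F)
    (hσ : ∀ x y : F, (x - y ∈ Dset g) ↔ (σ x - σ y ∈ Dset g)) (x y : F) :
    nnc g (σ x - σ y) = nnc g (x - y) := by
  classical
  unfold nnc
  symm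
  apply Finset.card_bij (fun u _ => σ x - σ (x - u))
  · intro u hu
    simp only [Finset.mem_filter, Finset.mem_univ, true_and] at hu ⊢
    constructor
    · exact (hσ x (x - u)).1 (by rw [sub_sub_cancel]; exact hu.1)
    · have h1 : σ x - σ (x - u) - (σ x - σ y) = σ y - σ (x - u) := by ring
      rw [h1]
      exact (hσ y (x - u)).1 (by
        have : y - (x - u) = u - (x - y) := by ring
        rw [this]; exact hu.2)
  · intro u1 h1 u2 h2 h
    have h' : σ (x - u1) = σ (x - u2) := sub_right_injective h
    exact sub_right_injective (σ.injective h')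
  · intro v hv
    simp only [Finset.mem_filter, Finset.mem_univ, true_and] at hv
    refine ⟨x - σ.symm (σ x - v), Finset.mem_filter.2 ⟨Finset.mem_univ _, ?_, ?_⟩, ?_⟩
    · exact (hσ x (σ.symm (σ x - v))).2 (by rw [Equiv.apply_symm_apply, sub_sub_cancel]; exact hv.1)
    · have h1 : x - σ.symm (σ x - v) - (x - y) = y - σ.symm (σ x - v) := by ring
      rw [h1]
      exact (hσ y (σ.symm (σ x - v))).2 (by
        rw [Equiv.apply_symm_apply]
        have : σ y - (σ x - v) = v - (σ x - σ y) := by ring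
        rw [this]; exact hv.2)
    · rw [sub_sub_cancel, Equiv.apply_symm_apply, sub_sub_cancel]

end Aux

def affinePerm {F : Type*} [Field F] (a b : F) (ha : a ≠ 0) : Equiv.Perm F where
  toFun x := a * x + b
  invFun x := a⁻¹ * (x - b)
  left_inv x := by field_simp; ring
  right_inv x := by field_simp; ring

theorem cyclotomic_tournament_two_arc_orbits
    (p : ℕ) (hp : p.Prime) (hp5 : p % 8 = 5)
    (F : Type) [Field F] [Fintype F] (hF : Fintype.card F = p)
    (g : F) (hg : orderOf g = p - 1) :
    let D : Set F := cycC4 g 0 ∪ cycC4 g 1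
    let Aut : Set (Equiv.Perm F) :=
      {σ | ∀ x y : F, (x - y ∈ D) ↔ (σ x - σ y ∈ D)}
    let O₀ : Set (F × F) := {z | z.1 - z.2 ∈ cycC4 g 0}
    let O₁ : Set (F × F) := {z | z.1 - z.2 ∈ cycC4 g 1}
    O₀.Nonempty ∧ O₁.Nonempty ∧ O₀ ∩ O₁ = ∅ ∧
    O₀ ∪ O₁ = {z : F × F | z.1 - z.2 ∈ D} ∧
    ∀ z w : F × F, z ∈ O₀ ∪ O₁ → w ∈ O₀ ∪ O₁ →
      ((∃ σ ∈ Aut, (σ z.1, σ z.2) = w) ↔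
        ((z ∈ O₀ ∧ w ∈ O₀) ∨ (z ∈ O₁ ∧ w ∈ O₁))) := by
  intro D Aut O₀ O₁
  obtain ⟨s, hs⟩ : ∃ s, p = 8 * s + 5 := ⟨p / 8, by omega⟩
  have hg0 : g ≠ 0 := hg_ne_zero hs hg
  refine ⟨⟨(1, 0), ⟨0, by simp⟩⟩, ⟨(g, 0), ⟨0, by simp⟩⟩, ?_, ?_, ?_⟩
  · ext z
    simp only [Set.mem_inter_iff, Set.mem_empty_iff_false, iff_false]
    rintro ⟨h1, h2⟩
    exact cyc_disj hs hF hg (i := 0) (j := 1) (by omega) (by omega) (by omega) h1 h2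
  · rfl
  · intro z w hz hw
    constructor
    · rintro ⟨σ, hσ, hzw⟩
      have hσ' : ∀ x y : F, (x - y ∈ Dset g) ↔ (σ x - σ y ∈ Dset g) := hσ
      have hinv := nnc_invariant (g := g) σ hσ' z.1 z.2
      have hw1 : σ z.1 = w.1 := congrArg Prod.fst hzw
      have hw2 : σ z.2 = w.2 := congrArg Prod.snd hzw
      rw [hw1, hw2] at hinv
      rcases hz with hz0 | hz1 <;> rcases hw with hw0 | hw1'
      · exact Or.inl ⟨hz0, hw0⟩
      · exfalso
        have e1 : nnc g (z.1 - z.2) = nnc g 1 := by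
          have := nnc_class hs hF hg (i := 0) hz0; rwa [pow_zero] at this
        have e2 : nnc g (w.1 - w.2) = nnc g g := by
          have := nnc_class hs hF hg (i := 1) hw1'; rwa [pow_one] at this
        exact nnc_ne hs hF hg (e1.symm.trans (hinv.symm.trans e2))
      · exfalso
        have e1 : nnc g (z.1 - z.2) = nnc g g := by
          have := nnc_class hs hF hg (i := 1) hz1; rwa [pow_one] at this
        have e2 : nnc g (w.1 - w.2) = nnc g 1 := by
          have := nnc_class hs hF hg (i := 0) hw0; rwa [pow_zero] at this
        exact nnc_ne hs hF hg (e2.symm.trans (hinv.trans e1))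
      · exact Or.inr ⟨hz1, hw1'⟩
    · have build : ∀ i : ℕ, z.1 - z.2 ∈ cycC4 g i → w.1 - w.2 ∈ cycC4 g i →
          ∃ σ ∈ Aut, (σ z.1, σ z.2) = w := by
        intro i hzi hwi
        obtain ⟨a, ha, hac⟩ := cyc_trans hs hF hg (i := i) hzi hwi
        have ha0 : a ≠ 0 := by obtain ⟨k, rfl⟩ := ha; exact pow_ne_zero _ hg0
        refine ⟨affinePerm a (w.2 - a * z.2) ha0, ?_, ?_⟩
        · intro x y
          have hxy : affinePerm a (w.2 - a * z.2) ha0 x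
              - affinePerm a (w.2 - a * z.2) ha0 y = a * (x - y) := by
            show a * x + (w.2 - a * z.2) - (a * y + (w.2 - a * z.2)) = a * (x - y)
            ring
          rw [hxy]
          exact scale_Dset hs hF hg ha (x - y)
        · have h1 : a * z.1 + (w.2 - a * z.2) = w.1 := by
            have h' : a * z.1 + (w.2 - a * z.2) = a * (z.1 - z.2) + w.2 := by ring
            rw [h', hac]; ring
          have h2 : a * z.2 + (w.2 - a * z.2) = w.2 := by ring
          exact Prod.ext h1 h2
      rintro (⟨hz0, hw0⟩ | ⟨hz1, hw1⟩)
      · exact build 0 hz0 hw0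
      · exact build 1 hz1 hw1
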